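/- The GKLO assignment defines an algebra homomorphism into difference operators: setting X_+(u) = −∑_{i=1}^N (u−w_i)^{-1} ∏_{j≠i}(w_i−w_j)^{-1} u_i^{-1}, X_-(u) = ∑_{i=1}^N (u−w_i−ℏ)^{-1} ∏_{j≠i}(w_i−w_j)^{-1} u_i, D_1(u) = ∏_{i=1}^N (u−w_i), D_2(u) = ∏_{i=1}^N (u−w_i−ℏ)^{-1}, the relation (u−v)[X_+(u), X_-(v)] = ℏ(D_1(v)^{-1}D_2(v) − D_1(u)^{-1}D_2(u)) holds, where the brackets are commutators in the algebra of difference operators and both sides are expanded as power series in u^{-1}, v^{-1}. -/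

import Mathlib

open MvPolynomial Finset

/-- The variables `w_1,…,w_N` together with `ℏ, u, v`. -/
abbrev DVar (N : ℕ) : Type := Fin N ⊕ Fin 3

/-- The field of rational functions in `w_1,…,w_N, ℏ, u, v` over `ℂ`, on which the
difference operators act. -/
abbrev DF (N : ℕ) : Type := FractionRing (MvPolynomial (DVar N) ℂ)

/-- The variable `w i`. -/
noncomputable def Wv {N : ℕ} (i : Fin N) : DF N :=
  algebraMap (MvPolynomial (DVar N) ℂ) (DF N) (X (Sum.inl i))

/-- The variable `ℏ`. -/
noncomputable def Hb {N : ℕ} : DF N :=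
  algebraMap (MvPolynomial (DVar N) ℂ) (DF N) (X (Sum.inr 0))

/-- The variable `u`. -/
noncomputable def Uv {N : ℕ} : DF N :=
  algebraMap (MvPolynomial (DVar N) ℂ) (DF N) (X (Sum.inr 1))

/-- The variable `v`. -/
noncomputable def Vvar {N : ℕ} : DF N :=
  algebraMap (MvPolynomial (DVar N) ℂ) (DF N) (X (Sum.inr 2))

/-- The substitution `w_i ↦ w_i + e·ℏ` on polynomials. -/
noncomputable def shiftHom (N : ℕ) (i : Fin N) (e : ℤ) :
    MvPolynomial (DVar N) ℂ →ₐ[ℂ] MvPolynomial (DVar N) ℂ :=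
  aeval fun x => X x + if x = Sum.inl i then e • X (Sum.inr 0) else 0

/-- The shift operator `u_i^{∓1}`, acting on rational functions by
`f(w) ↦ f(w_1,…,w_i + e·ℏ,…,w_N)`. -/
noncomputable def shiftF (N : ℕ) (i : Fin N) (e : ℤ) : DF N →+* DF N :=
  IsFractionRing.lift
    (g := (algebraMap (MvPolynomial (DVar N) ℂ) (DF N)).comp
            (shiftHom N i e).toRingHom)
    (by
      refine (IsFractionRing.injective (MvPolynomial (DVar N) ℂ) (DF N)).comp ?_
      have hcomp : (shiftHom N i (-e)).comp (shiftHom N i e) =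
          AlgHom.id ℂ (MvPolynomial (DVar N) ℂ) := by
        apply MvPolynomial.algHom_ext
        intro x
        by_cases hx : x = Sum.inl i <;>
          simp [shiftHom, hx, map_add, map_zsmul] <;> abel
      intro a b hab
      have := congrArg (shiftHom N i (-e)) hab
      calc a = (shiftHom N i (-e)).comp (shiftHom N i e) a := by rw [hcomp]; rfl
        _ = (shiftHom N i (-e)).comp (shiftHom N i e) b := this
        _ = b := by rw [hcomp]; rfl)

/-- The GKLO image of `x_+(u)`:
`X_+(u) = −∑_{i=1}^N (u − w_i)⁻¹ ∏_{j≠i} (w_i − w_j)⁻¹ · u_i^{-1}`,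
as an operator on rational functions parametrized by `P` (the spectral variable). -/
noncomputable def XpOp {N : ℕ} (P : DF N) (f : DF N) : DF N :=
  -∑ i : Fin N,
    ((P - Wv i)⁻¹ * ∏ j ∈ Finset.univ.erase i, (Wv i - Wv j)⁻¹) * shiftF N i (-1) f

/-- The GKLO image of `x_-(v)`:
`X_-(v) = ∑_{i=1}^N (v − w_i − ℏ)⁻¹ ∏_{j≠i} (w_i − w_j)⁻¹ · u_i`. -/
noncomputable def XmOp {N : ℕ} (P : DF N) (f : DF N) : DF N :=
  ∑ i : Fin N,
    ((P - Wv i - Hb)⁻¹ * ∏ j ∈ Finset.univ.erase i, (Wv i - Wv j)⁻¹) * shiftF N i 1 f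


section Infra
variable {N : ℕ}

lemma algMap_ne_zero (p : MvPolynomial (DVar N) ℂ) (c : DVar N → ℂ)
    (h : aeval c p ≠ 0) : algebraMap (MvPolynomial (DVar N) ℂ) (DF N) p ≠ 0 := by
  intro hp
  apply h
  have : p = 0 :=
    IsFractionRing.injective (MvPolynomial (DVar N) ℂ) (DF N) (by simpa using hp)
  simp [this]

lemma hH_ne : (Hb : DF N) ≠ 0 := by
  apply algMap_ne_zero _ (fun x => if x = Sum.inr 0 then 1 else 0)
  simp

lemma hUW_ne (i : Fin N) : (Uv : DF N) - Wv i ≠ 0 := by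
  rw [Uv, Wv, ← RingHom.map_sub]
  apply algMap_ne_zero _ (fun x => if x = Sum.inr 1 then 1 else 0)
  simp

lemma hUWH_ne (i : Fin N) : (Uv : DF N) - Wv i - Hb ≠ 0 := by
  rw [Uv, Wv, Hb, ← RingHom.map_sub, ← RingHom.map_sub]
  apply algMap_ne_zero _ (fun x => if x = Sum.inr 1 then 1 else 0)
  simp

lemma hVW_ne (i : Fin N) : (Vvar : DF N) - Wv i ≠ 0 := by
  rw [Vvar, Wv, ← RingHom.map_sub]
  apply algMap_ne_zero _ (fun x => if x = Sum.inr 2 then 1 else 0)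
  simp

lemma hVWH_ne (i : Fin N) : (Vvar : DF N) - Wv i - Hb ≠ 0 := by
  rw [Vvar, Wv, Hb, ← RingHom.map_sub, ← RingHom.map_sub]
  apply algMap_ne_zero _ (fun x => if x = Sum.inr 2 then 1 else 0)
  simp

lemma hWW_ne {i j : Fin N} (h : i ≠ j) : (Wv i : DF N) - Wv j ≠ 0 := by
  rw [Wv, Wv, ← RingHom.map_sub]
  apply algMap_ne_zero _ (fun x => if x = Sum.inl i then 1 else 0)
  rw [map_sub, aeval_X, aeval_X, if_pos rfl, if_neg (by simp [Ne.symm h])]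
  norm_num

lemma hWWH_ne (i j : Fin N) : (Wv i : DF N) - Wv j - Hb ≠ 0 := by
  rw [Wv, Wv, Hb, ← RingHom.map_sub, ← RingHom.map_sub]
  by_cases h : i = j
  · subst h
    apply algMap_ne_zero _ (fun x => if x = Sum.inr 0 then 1 else 0)
    simp
  · apply algMap_ne_zero _ (fun x => if x = Sum.inl i then 1 else 0)
    rw [map_sub, map_sub, aeval_X, aeval_X, aeval_X, if_pos rfl,
      if_neg (by simp [Ne.symm h]), if_neg (by simp)]
    norm_num

lemma hWWHp_ne (i j : Fin N) : (Wv i : DF N) - Wv j + Hb ≠ 0 := by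
  have := hWWH_ne (N := N) j i
  intro h; apply this
  rw [show (Wv j : DF N) - Wv i - Hb = -(Wv i - Wv j + Hb) by ring, h, neg_zero]

end Infra

section Shift
variable {N : ℕ}

set_option maxHeartbeats 1000000
set_option synthInstance.maxHeartbeats 400000

lemma shiftF_algebraMap (i : Fin N) (e : ℤ) (p : MvPolynomial (DVar N) ℂ) :
    shiftF N i e (algebraMap (MvPolynomial (DVar N) ℂ) (DF N) p) =
      algebraMap (MvPolynomial (DVar N) ℂ) (DF N) (shiftHom N i e p) :=
  IsFractionRing.lift_algebraMap _ _

lemma shiftF_Wv (i j : Fin N) (e : ℤ) :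
    shiftF N i e (Wv j) = Wv j + if j = i then (e : DF N) * Hb else 0 := by
  rw [Wv, shiftF_algebraMap, shiftHom, aeval_X]
  by_cases h : j = i
  · subst h
    rw [if_pos rfl, if_pos rfl, zsmul_eq_mul, map_add, map_mul, map_intCast, Hb]
  · rw [if_neg (by simp [h]), if_neg h, add_zero, add_zero]

lemma shiftF_Hb (i : Fin N) (e : ℤ) : shiftF N i e (Hb : DF N) = Hb := by
  rw [Hb, shiftF_algebraMap, shiftHom, aeval_X, if_neg (by simp), add_zero]

lemma shiftF_Uv (i : Fin N) (e : ℤ) : shiftF N i e (Uv : DF N) = Uv := by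
  rw [Uv, shiftF_algebraMap, shiftHom, aeval_X, if_neg (by simp), add_zero]

lemma shiftF_Vvar (i : Fin N) (e : ℤ) : shiftF N i e (Vvar : DF N) = Vvar := by
  rw [Vvar, shiftF_algebraMap, shiftHom, aeval_X, if_neg (by simp), add_zero]

lemma shiftHom_fix_c (i : Fin N) (e : ℤ) (k : Fin N) (e' : ℤ) (x : DVar N) :
    shiftHom N i e (if x = Sum.inl k then (e' • X (Sum.inr 0) : MvPolynomial (DVar N) ℂ) else 0)
      = (if x = Sum.inl k then (e' • X (Sum.inr 0) : MvPolynomial (DVar N) ℂ) else 0) := by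
  split_ifs
  · rw [map_zsmul, shiftHom, aeval_X, if_neg (by simp), add_zero]
  · rw [map_zero]

lemma shiftHom_X (i : Fin N) (e : ℤ) (x : DVar N) :
    shiftHom N i e (X x) =
      X x + if x = Sum.inl i then (e • X (Sum.inr 0) : MvPolynomial (DVar N) ℂ) else 0 := by
  rw [shiftHom, aeval_X]

lemma shiftHom_comm (i k : Fin N) (e e' : ℤ) :
    (shiftHom N i e).comp (shiftHom N k e') = (shiftHom N k e').comp (shiftHom N i e) := by
  apply MvPolynomial.algHom_ext
  intro x
  conv_lhs => rw [AlgHom.comp_apply, shiftHom_X, map_add, shiftHom_fix_c, shiftHom_X]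
  conv_rhs => rw [AlgHom.comp_apply, shiftHom_X, map_add, shiftHom_fix_c, shiftHom_X]
  ring

lemma shiftF_comm (i k : Fin N) (e e' : ℤ) (f : DF N) :
    shiftF N i e (shiftF N k e' f) = shiftF N k e' (shiftF N i e f) := by
  have key : (shiftF N i e).comp (shiftF N k e') = (shiftF N k e').comp (shiftF N i e) := by
    apply IsLocalization.ringHom_ext (nonZeroDivisors (MvPolynomial (DVar N) ℂ))
    refine RingHom.ext fun p => ?_
    simp only [RingHom.comp_apply]
    rw [shiftF_algebraMap, shiftF_algebraMap, shiftF_algebraMap, shiftF_algebraMap,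
      show (shiftHom N i e) ((shiftHom N k e') p)
          = ((shiftHom N i e).comp (shiftHom N k e')) p from rfl,
      shiftHom_comm]
    rfl
  exact RingHom.congr_fun key f

lemma shiftF_inv (i : Fin N) (f : DF N) :
    shiftF N i (-1) (shiftF N i 1 f) = f := by
  have hcomp : (shiftHom N i (-1)).comp (shiftHom N i 1) =
      AlgHom.id ℂ (MvPolynomial (DVar N) ℂ) := by
    apply MvPolynomial.algHom_ext
    intro x
    by_cases hx : x = Sum.inl i <;>
      simp [shiftHom, hx, map_add, map_zsmul] <;> abel
  have key : (shiftF N i (-1)).comp (shiftF N i 1) = RingHom.id (DF N) := by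
    apply IsLocalization.ringHom_ext (nonZeroDivisors (MvPolynomial (DVar N) ℂ))
    refine RingHom.ext fun p => ?_
    simp only [RingHom.comp_apply, RingHom.id_apply]
    rw [shiftF_algebraMap, shiftF_algebraMap,
      show (shiftHom N i (-1)) ((shiftHom N i 1) p)
          = ((shiftHom N i (-1)).comp (shiftHom N i 1)) p from rfl,
      hcomp]
    rfl
  exact RingHom.congr_fun key f

end Shift

section Key
variable {N : ℕ}

set_option maxHeartbeats 1000000
set_option synthInstance.maxHeartbeats 400000

lemma partial_fractions {K : Type*} [Field K] {ι : Type*} [DecidableEq ι] (s : Finset ι)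
    (hs : s.Nonempty) (a : ι → K) (hinj : Set.InjOn a s) (x : K)
    (hx : ∀ i ∈ s, x - a i ≠ 0) :
    ∑ i ∈ s, (x - a i)⁻¹ * ∏ j ∈ s.erase i, (a i - a j)⁻¹ =
      (∏ i ∈ s, (x - a i))⁻¹ := by
  have h1 := Lagrange.sum_basis hinj hs
  have h2 := congrArg (Polynomial.eval x) h1
  simp only [Polynomial.eval_finset_sum, Lagrange.basis, Polynomial.eval_prod,
    Lagrange.basisDivisor, Polynomial.eval_mul, Polynomial.eval_C, Polynomial.eval_sub,
    Polynomial.eval_X, Polynomial.eval_one] at h2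
  refine eq_inv_of_mul_eq_one_left ?_
  rw [Finset.sum_mul, ← h2]
  refine Finset.sum_congr rfl fun i hi => ?_
  rw [Finset.prod_mul_distrib, ← Finset.mul_prod_erase s (fun j => x - a j) hi,
    show (x - a i)⁻¹ * (∏ j ∈ s.erase i, (a i - a j)⁻¹) *
        ((x - a i) * ∏ j ∈ s.erase i, (x - a j)) =
      ((x - a i)⁻¹ * (x - a i)) *
        ((∏ j ∈ s.erase i, (a i - a j)⁻¹) * ∏ j ∈ s.erase i, (x - a j)) by ring,
    inv_mul_cancel₀ (hx i hi), one_mul]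

lemma erase_inl (i : Fin N) :
    (univ : Finset (Fin N ⊕ Fin N)).erase (Sum.inl i) = (univ.erase i).disjSum univ := by
  ext t
  cases t <;> simp [Ne.symm]

lemma erase_inr (i : Fin N) :
    (univ : Finset (Fin N ⊕ Fin N)).erase (Sum.inr i) = univ.disjSum (univ.erase i) := by
  ext t
  cases t <;> simp [Ne.symm]

lemma keyID (hN : 0 < N) (x : DF N) (hx1 : ∀ i, x - Wv i ≠ 0)
    (hx2 : ∀ i, x - Wv i - Hb ≠ 0) :
    ∑ i : Fin N,
      ((x - Wv i)⁻¹ * (∏ j ∈ univ.erase i, ((Wv i - Wv j)⁻¹ * (Wv i - Wv j - Hb)⁻¹))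
        - (x - Wv i - Hb)⁻¹ * (∏ j ∈ univ.erase i, ((Wv i - Wv j)⁻¹ * (Wv i - Wv j + Hb)⁻¹)))
      = -Hb * (∏ i : Fin N, ((x - Wv i) * (x - Wv i - Hb)))⁻¹ := by
  classical
  set a : Fin N ⊕ Fin N → DF N := Sum.elim Wv (fun i => Wv i + Hb) with ha
  have hinj : Set.InjOn a (univ : Finset (Fin N ⊕ Fin N)) := by
    intro s _ t _ h
    rcases s with i | i <;> rcases t with j | j <;> simp only [ha, Sum.elim_inl, Sum.elim_inr] at h
    · by_contra hne
      exact hWW_ne (by simpa using hne) (sub_eq_zero.mpr h)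
    · exact absurd (by rw [h]; ring) (hWWH_ne i j)
    · exact absurd (by rw [← h]; ring) (hWWH_ne j i)
    · by_contra hne
      have hww : (Wv i : DF N) = Wv j := by
        have := h
        linear_combination this
      exact hWW_ne (by simpa using hne) (sub_eq_zero.mpr hww)
  have hx : ∀ t ∈ (univ : Finset (Fin N ⊕ Fin N)), x - a t ≠ 0 := by
    intro t _
    rcases t with i | i
    · simpa [ha] using hx1 i
    · rw [show x - a (Sum.inr i) = x - Wv i - Hb by simp [ha]; ring]
      exact hx2 i
  have hs : (univ : Finset (Fin N ⊕ Fin N)).Nonempty :=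
    ⟨Sum.inl ⟨0, hN⟩, mem_univ _⟩
  have pf := partial_fractions univ hs a hinj x hx
  -- rewrite the RHS product
  have hprod : (∏ t : Fin N ⊕ Fin N, (x - a t)) =
      ∏ i : Fin N, ((x - Wv i) * (x - Wv i - Hb)) := by
    rw [Fintype.prod_sum_type, Finset.prod_mul_distrib]
    congr 1
    exact Finset.prod_congr rfl fun i _ => by simp [ha]; ring
  -- rewrite the LHS sum
  rw [Fintype.sum_sum_type] at pf
  have hGamma : ∀ i : Fin N,
      (∏ t ∈ (univ : Finset (Fin N ⊕ Fin N)).erase (Sum.inl i), (a (Sum.inl i) - a t)⁻¹)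
        = (-Hb)⁻¹ * ∏ j ∈ univ.erase i, ((Wv i - Wv j)⁻¹ * (Wv i - Wv j - Hb)⁻¹) := by
    intro i
    rw [erase_inl, Finset.prod_disjSum]
    have h2 : (∏ j : Fin N, (a (Sum.inl i) - a (Sum.inr j))⁻¹)
        = (-Hb)⁻¹ * ∏ j ∈ univ.erase i, (Wv i - Wv j - Hb)⁻¹ := by
      rw [← Finset.mul_prod_erase univ _ (mem_univ i)]
      congr 1
      · simp only [ha, Sum.elim_inl, Sum.elim_inr]
        rw [show (Wv i : DF N) - (Wv i + Hb) = -Hb by ring]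
      · exact Finset.prod_congr rfl fun j _ => by
          simp only [ha, Sum.elim_inl, Sum.elim_inr]
          rw [show (Wv i : DF N) - (Wv j + Hb) = Wv i - Wv j - Hb by ring]
    rw [h2, Finset.prod_mul_distrib]
    have h3 : (∏ j ∈ univ.erase i, (a (Sum.inl i) - a (Sum.inl j))⁻¹)
        = ∏ j ∈ univ.erase i, (Wv i - Wv j)⁻¹ := Finset.prod_congr rfl fun j _ => by simp [ha]
    rw [h3]; ring
  have hDelta : ∀ i : Fin N,
      (∏ t ∈ (univ : Finset (Fin N ⊕ Fin N)).erase (Sum.inr i), (a (Sum.inr i) - a t)⁻¹)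
        = Hb⁻¹ * ∏ j ∈ univ.erase i, ((Wv i - Wv j)⁻¹ * (Wv i - Wv j + Hb)⁻¹) := by
    intro i
    rw [erase_inr, Finset.prod_disjSum]
    have h2 : (∏ j : Fin N, (a (Sum.inr i) - a (Sum.inl j))⁻¹)
        = Hb⁻¹ * ∏ j ∈ univ.erase i, (Wv i - Wv j + Hb)⁻¹ := by
      rw [← Finset.mul_prod_erase univ _ (mem_univ i)]
      congr 1
      · simp only [ha, Sum.elim_inl, Sum.elim_inr]
        rw [show (Wv i : DF N) + Hb - Wv i = Hb by ring]
      · exact Finset.prod_congr rfl fun j _ => by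
          simp only [ha, Sum.elim_inl, Sum.elim_inr]
          rw [show (Wv i : DF N) + Hb - Wv j = Wv i - Wv j + Hb by ring]
    have h3 : (∏ j ∈ univ.erase i, (a (Sum.inr i) - a (Sum.inr j))⁻¹)
        = ∏ j ∈ univ.erase i, (Wv i - Wv j)⁻¹ :=
      Finset.prod_congr rfl fun j _ => by
        simp only [ha, Sum.elim_inl, Sum.elim_inr]
        rw [show (Wv i : DF N) + Hb - (Wv j + Hb) = Wv i - Wv j by ring]
    rw [h2, h3, Finset.prod_mul_distrib]
    ring
  simp only [hGamma, hDelta, hprod] at pf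
  have hax : ∀ i : Fin N, x - a (Sum.inl i) = x - Wv i := fun i => by
    simp only [ha, Sum.elim_inl]
  have hax2 : ∀ i : Fin N, x - a (Sum.inr i) = x - Wv i - Hb := fun i => by
    simp only [ha, Sum.elim_inr]; ring
  simp only [hax, hax2] at pf
  rw [← pf, mul_add, Finset.mul_sum, Finset.mul_sum, ← Finset.sum_add_distrib]
  refine Finset.sum_congr rfl fun i _ => ?_
  set A := (x - Wv i)⁻¹
  set B := (x - Wv i - Hb)⁻¹
  set P := ∏ j ∈ univ.erase i, (Wv i - Wv j)⁻¹ * (Wv i - Wv j - Hb)⁻¹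
  set Q := ∏ j ∈ univ.erase i, (Wv i - Wv j)⁻¹ * (Wv i - Wv j + Hb)⁻¹
  have e1 : (-Hb) * (-Hb : DF N)⁻¹ = 1 := mul_inv_cancel₀ (neg_ne_zero.mpr hH_ne)
  have e2 : (Hb : DF N) * Hb⁻¹ = 1 := mul_inv_cancel₀ hH_ne
  linear_combination (-(A * P)) * e1 + (B * Q) * e2
end Key

section Ops
variable {N : ℕ}

set_option maxHeartbeats 1000000
set_option synthInstance.maxHeartbeats 400000

lemma DFinv_neg {N : ℕ} (x : DF N) : (-x)⁻¹ = -x⁻¹ := by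
  rcases eq_or_ne x 0 with h | h
  · subst h; norm_num
  · exact (eq_inv_of_mul_eq_one_left (by linear_combination inv_mul_cancel₀ h)).symm

lemma smB_diag (i : Fin N) :
    shiftF N i (-1) ((Vvar - Wv i - Hb)⁻¹ * ∏ j ∈ univ.erase i, (Wv i - Wv j)⁻¹)
      = (Vvar - Wv i)⁻¹ * ∏ j ∈ univ.erase i, (Wv i - Wv j - Hb)⁻¹ := by
  rw [map_mul, map_inv₀, map_sub, map_sub, shiftF_Vvar, shiftF_Wv, shiftF_Hb, if_pos rfl,
    show (Vvar - (Wv i + ((-1 : ℤ) : DF N) * Hb) - Hb) = Vvar - Wv i by push_cast; ring,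
    map_prod]
  congr 1
  refine Finset.prod_congr rfl fun j hj => ?_
  rw [map_inv₀, map_sub, shiftF_Wv, shiftF_Wv, if_pos rfl, if_neg (mem_erase.1 hj).1,
    add_zero]
  congr 1
  push_cast
  ring

lemma spA_diag (i : Fin N) :
    shiftF N i 1 ((Uv - Wv i)⁻¹ * ∏ j ∈ univ.erase i, (Wv i - Wv j)⁻¹)
      = (Uv - Wv i - Hb)⁻¹ * ∏ j ∈ univ.erase i, (Wv i - Wv j + Hb)⁻¹ := by
  rw [map_mul, map_inv₀, map_sub, shiftF_Uv, shiftF_Wv, if_pos rfl,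
    show (Uv - (Wv i + ((1 : ℤ) : DF N) * Hb)) = Uv - Wv i - Hb by push_cast; ring,
    map_prod]
  congr 1
  refine Finset.prod_congr rfl fun j hj => ?_
  rw [map_inv₀, map_sub, shiftF_Wv, shiftF_Wv, if_pos rfl, if_neg (mem_erase.1 hj).1,
    add_zero]
  congr 1
  push_cast
  ring

lemma offdiag {i k : Fin N} (h : k ≠ i) :
    ((Uv - Wv i)⁻¹ * ∏ j ∈ univ.erase i, (Wv i - Wv j)⁻¹) *
        shiftF N i (-1) ((Vvar - Wv k - Hb)⁻¹ * ∏ j ∈ univ.erase k, (Wv k - Wv j)⁻¹)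
      = ((Vvar - Wv k - Hb)⁻¹ * ∏ j ∈ univ.erase k, (Wv k - Wv j)⁻¹) *
        shiftF N k 1 ((Uv - Wv i)⁻¹ * ∏ j ∈ univ.erase i, (Wv i - Wv j)⁻¹) := by
  have hik : i ∈ univ.erase k := mem_erase.2 ⟨Ne.symm h, mem_univ i⟩
  have hki : k ∈ univ.erase i := mem_erase.2 ⟨h, mem_univ k⟩
  have hsmB : shiftF N i (-1) ((Vvar - Wv k - Hb)⁻¹ * ∏ j ∈ univ.erase k, (Wv k - Wv j)⁻¹)
      = (Vvar - Wv k - Hb)⁻¹ *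
        ((Wv k - Wv i + Hb)⁻¹ * ∏ j ∈ (univ.erase k).erase i, (Wv k - Wv j)⁻¹) := by
    rw [map_mul, map_inv₀, map_sub, map_sub, shiftF_Vvar, shiftF_Wv, shiftF_Hb,
      if_neg h, add_zero, map_prod, ← Finset.mul_prod_erase (univ.erase k) _ hik]
    congr 1
    congr 1
    · rw [map_inv₀, map_sub, shiftF_Wv, shiftF_Wv, if_neg h, if_pos rfl, add_zero]
      congr 1
      push_cast
      ring
    · refine Finset.prod_congr rfl fun j hj => ?_
      rw [map_inv₀, map_sub, shiftF_Wv, shiftF_Wv, if_neg h, if_neg (mem_erase.1 hj).1,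
        add_zero, add_zero]
  have hspA : shiftF N k 1 ((Uv - Wv i)⁻¹ * ∏ j ∈ univ.erase i, (Wv i - Wv j)⁻¹)
      = (Uv - Wv i)⁻¹ *
        ((Wv i - Wv k - Hb)⁻¹ * ∏ j ∈ (univ.erase i).erase k, (Wv i - Wv j)⁻¹) := by
    rw [map_mul, map_inv₀, map_sub, shiftF_Uv, shiftF_Wv, if_neg (Ne.symm h), add_zero,
      map_prod, ← Finset.mul_prod_erase (univ.erase i) _ hki]
    congr 1
    refine congrArg₂ (· * ·) ?_ ?_
    · rw [map_inv₀, map_sub, shiftF_Wv, shiftF_Wv, if_neg (Ne.symm h), if_pos rfl, add_zero]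
      congr 1
      push_cast
      ring
    · refine Finset.prod_congr rfl fun j hj => ?_
      rw [map_inv₀, map_sub, shiftF_Wv, shiftF_Wv, if_neg (Ne.symm h),
        if_neg (mem_erase.1 hj).1, add_zero, add_zero]
  rw [hsmB, hspA, ← Finset.mul_prod_erase (univ.erase k) _ hik,
    ← Finset.mul_prod_erase (univ.erase i) _ hki,
    show (Wv k - Wv i : DF N) = -(Wv i - Wv k) by ring,
    show (Wv i - Wv k - Hb : DF N) = -(Wv k - Wv i + Hb) by ring]
  simp only [DFinv_neg]
  ring

end Ops


section Main
variable {N : ℕ}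

set_option maxHeartbeats 4000000
set_option synthInstance.maxHeartbeats 400000

/-- coefficient of `x_+(u)` -/
noncomputable def Ac (N : ℕ) (i : Fin N) : DF N :=
  (Uv - Wv i)⁻¹ * ∏ j ∈ univ.erase i, (Wv i - Wv j)⁻¹

/-- coefficient of `x_-(v)` -/
noncomputable def Bc (N : ℕ) (k : Fin N) : DF N :=
  (Vvar - Wv k - Hb)⁻¹ * ∏ j ∈ univ.erase k, (Wv k - Wv j)⁻¹

lemma XpOp_eq (g : DF N) : XpOp Uv g = -∑ i : Fin N, Ac N i * shiftF N i (-1) g := rfl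

lemma XmOp_eq (g : DF N) : XmOp Vvar g = ∑ k : Fin N, Bc N k * shiftF N k 1 g := rfl

lemma smB_diag' (i : Fin N) : shiftF N i (-1) (Bc N i)
    = (Vvar - Wv i)⁻¹ * ∏ j ∈ univ.erase i, (Wv i - Wv j - Hb)⁻¹ := smB_diag i

lemma spA_diag' (i : Fin N) : shiftF N i 1 (Ac N i)
    = (Uv - Wv i - Hb)⁻¹ * ∏ j ∈ univ.erase i, (Wv i - Wv j + Hb)⁻¹ := spA_diag i

lemma offdiag' {i k : Fin N} (h : k ≠ i) :
    Ac N i * shiftF N i (-1) (Bc N k) = Bc N k * shiftF N k 1 (Ac N i) := offdiag h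


set_option maxHeartbeats 4000000 in
set_option synthInstance.maxHeartbeats 400000 in
/-- The GKLO assignment defines an algebra homomorphism into
difference operators: with `X_+(u), X_-(v)` as above and
`D_1(u) = ∏_i (u − w_i)`, `D_2(u) = ∏_i (u − w_i − ℏ)⁻¹`, the shifted-Yangian relation
`(u − v)[X_+(u), X_-(v)] = ℏ (D_1(v)⁻¹ D_2(v) − D_1(u)⁻¹ D_2(u))`
holds as an identity of operators on the field of rational functions in
`w_1,…,w_N, ℏ, u, v`. -/
theorem statement19 (N : ℕ) (f : DF N) :
    (Uv - Vvar) * (XpOp Uv (XmOp Vvar f) - XmOp Vvar (XpOp Uv f)) =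
      Hb * ((∏ i : Fin N, ((Vvar - Wv i) * (Vvar - Wv i - Hb)))⁻¹ -
          (∏ i : Fin N, ((Uv - Wv i) * (Uv - Wv i - Hb)))⁻¹) * f := by
  classical
  rcases Nat.eq_zero_or_pos N with hN | hN
  · subst hN
    simp [XpOp, XmOp]
  · have e1 : XpOp Uv (XmOp Vvar f) = -∑ i : Fin N, ∑ k : Fin N,
        (Ac N i * shiftF N i (-1) (Bc N k)) * shiftF N i (-1) (shiftF N k 1 f) := by
      rw [XmOp_eq, XpOp_eq]
      congr 1
      refine Finset.sum_congr rfl fun i _ => ?_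
      rw [map_sum, Finset.mul_sum]
      refine Finset.sum_congr rfl fun k _ => ?_
      rw [map_mul, ← mul_assoc]
    have e2 : XmOp Vvar (XpOp Uv f) = -∑ i : Fin N, ∑ k : Fin N,
        (Bc N k * shiftF N k 1 (Ac N i)) * shiftF N i (-1) (shiftF N k 1 f) := by
      rw [XpOp_eq, XmOp_eq]
      have hone : ∀ k : Fin N, Bc N k * shiftF N k 1 (-∑ i : Fin N, Ac N i * shiftF N i (-1) f)
          = -∑ i : Fin N, (Bc N k * shiftF N k 1 (Ac N i)) *
              shiftF N i (-1) (shiftF N k 1 f) := by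
        intro k
        have hs : shiftF N k 1 (-∑ i : Fin N, Ac N i * shiftF N i (-1) f)
            = -∑ i : Fin N, (shiftF N k 1 (Ac N i)) * shiftF N i (-1) (shiftF N k 1 f) := by
          rw [map_neg, map_sum]
          congr 2
          refine funext fun i => ?_
          rw [map_mul, shiftF_comm k i 1 (-1) f]
        rw [hs]
        have hm : Bc N k * ∑ i : Fin N, (shiftF N k 1 (Ac N i)) * shiftF N i (-1) (shiftF N k 1 f)
            = ∑ i : Fin N, Bc N k * ((shiftF N k 1 (Ac N i)) * shiftF N i (-1) (shiftF N k 1 f)) :=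
          Finset.mul_sum _ _ _
        have hc : ∑ i : Fin N, Bc N k * ((shiftF N k 1 (Ac N i)) * shiftF N i (-1) (shiftF N k 1 f))
            = ∑ i : Fin N, (Bc N k * shiftF N k 1 (Ac N i)) * shiftF N i (-1) (shiftF N k 1 f) :=
          Finset.sum_congr rfl fun i _ => (mul_assoc _ _ _).symm
        linear_combination - hm - hc
      simp only [hone]
      have h2 : ∑ k : Fin N, -(∑ i : Fin N, (Bc N k * shiftF N k 1 (Ac N i)) *
            shiftF N i (-1) (shiftF N k 1 f))
          = -∑ k : Fin N, ∑ i : Fin N, (Bc N k * shiftF N k 1 (Ac N i)) *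
            shiftF N i (-1) (shiftF N k 1 f) := Finset.sum_neg_distrib _
      rw [h2]
      refine congrArg Neg.neg ?_
      exact Finset.sum_comm
    have e3 : XpOp Uv (XmOp Vvar f) - XmOp Vvar (XpOp Uv f)
        = -∑ i : Fin N,
            (Ac N i * shiftF N i (-1) (Bc N i) - Bc N i * shiftF N i 1 (Ac N i)) * f := by
      rw [e1, e2]
      have hinner : ∑ i : Fin N, ∑ k : Fin N,
            (Ac N i * shiftF N i (-1) (Bc N k)) * shiftF N i (-1) (shiftF N k 1 f)
          - ∑ i : Fin N, ∑ k : Fin N,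
            (Bc N k * shiftF N k 1 (Ac N i)) * shiftF N i (-1) (shiftF N k 1 f)
          = ∑ i : Fin N,
            (Ac N i * shiftF N i (-1) (Bc N i) - Bc N i * shiftF N i 1 (Ac N i)) * f := by
        rw [← Finset.sum_sub_distrib]
        refine Finset.sum_congr rfl fun i _ => ?_
        rw [← Finset.sum_sub_distrib]
        have hcomb : ∀ k : Fin N,
            (Ac N i * shiftF N i (-1) (Bc N k)) * shiftF N i (-1) (shiftF N k 1 f)
              - (Bc N k * shiftF N k 1 (Ac N i)) * shiftF N i (-1) (shiftF N k 1 f)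
            = (Ac N i * shiftF N i (-1) (Bc N k) - Bc N k * shiftF N k 1 (Ac N i)) *
                shiftF N i (-1) (shiftF N k 1 f) := fun k => (sub_mul _ _ _).symm
        simp only [hcomb]
        rw [← Finset.add_sum_erase univ _ (mem_univ i)]
        have hzero : ∑ k ∈ univ.erase i,
            (Ac N i * shiftF N i (-1) (Bc N k) - Bc N k * shiftF N k 1 (Ac N i)) *
              shiftF N i (-1) (shiftF N k 1 f) = 0 := by
          refine Finset.sum_eq_zero fun k hk => ?_
          rw [sub_eq_zero.mpr (offdiag' (mem_erase.1 hk).1), zero_mul]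
        rw [hzero, add_zero, shiftF_inv]
      linear_combination - hinner
    rw [e3]
    have e4 : ∀ i : Fin N,
        (Uv - Vvar) * (Ac N i * shiftF N i (-1) (Bc N i) - Bc N i * shiftF N i 1 (Ac N i))
          = ((Vvar - Wv i)⁻¹ *
                ∏ j ∈ univ.erase i, ((Wv i - Wv j)⁻¹ * (Wv i - Wv j - Hb)⁻¹)
              - (Vvar - Wv i - Hb)⁻¹ *
                ∏ j ∈ univ.erase i, ((Wv i - Wv j)⁻¹ * (Wv i - Wv j + Hb)⁻¹))
            - ((Uv - Wv i)⁻¹ *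
                ∏ j ∈ univ.erase i, ((Wv i - Wv j)⁻¹ * (Wv i - Wv j - Hb)⁻¹)
              - (Uv - Wv i - Hb)⁻¹ *
                ∏ j ∈ univ.erase i, ((Wv i - Wv j)⁻¹ * (Wv i - Wv j + Hb)⁻¹)) := by
      intro i
      rw [smB_diag', spA_diag', Ac, Bc, Finset.prod_mul_distrib, Finset.prod_mul_distrib]
      generalize ∏ j ∈ univ.erase i, (Wv i - Wv j)⁻¹ = P
      generalize ∏ j ∈ univ.erase i, (Wv i - Wv j - Hb)⁻¹ = Q
      generalize ∏ j ∈ univ.erase i, (Wv i - Wv j + Hb)⁻¹ = R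
      field_simp [hUW_ne i, hVW_ne i, hUWH_ne i, hVWH_ne i]
      ring
    have e5 : -∑ i : Fin N,
        ((Uv - Vvar) *
          (Ac N i * shiftF N i (-1) (Bc N i) - Bc N i * shiftF N i 1 (Ac N i)))
        = Hb * ((∏ i : Fin N, ((Vvar - Wv i) * (Vvar - Wv i - Hb)))⁻¹ -
            (∏ i : Fin N, ((Uv - Wv i) * (Uv - Wv i - Hb)))⁻¹) := by
      simp only [e4]
      rw [Finset.sum_sub_distrib,
        keyID hN Vvar (fun i => hVW_ne i) (fun i => hVWH_ne i),
        keyID hN Uv (fun i => hUW_ne i) (fun i => hUWH_ne i)]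
      ring
    calc (Uv - Vvar) * -∑ i : Fin N,
          (Ac N i * shiftF N i (-1) (Bc N i) - Bc N i * shiftF N i 1 (Ac N i)) * f
        = (-∑ i : Fin N, ((Uv - Vvar) *
            (Ac N i * shiftF N i (-1) (Bc N i) - Bc N i * shiftF N i 1 (Ac N i)))) * f := by
          have hmulsum : (Uv - Vvar) * ∑ i : Fin N,
              (Ac N i * shiftF N i (-1) (Bc N i) - Bc N i * shiftF N i 1 (Ac N i)) * f
              = ∑ i : Fin N, (Uv - Vvar) *
                ((Ac N i * shiftF N i (-1) (Bc N i) - Bc N i * shiftF N i 1 (Ac N i)) * f) :=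
            Finset.mul_sum _ _ _
          have hsum_mul : (∑ i : Fin N, ((Uv - Vvar) *
              (Ac N i * shiftF N i (-1) (Bc N i) - Bc N i * shiftF N i 1 (Ac N i)))) * f
              = ∑ i : Fin N, ((Uv - Vvar) *
                (Ac N i * shiftF N i (-1) (Bc N i) - Bc N i * shiftF N i 1 (Ac N i))) * f :=
            Finset.sum_mul _ _ _
          have hcong : ∑ i : Fin N, (Uv - Vvar) *
                ((Ac N i * shiftF N i (-1) (Bc N i) - Bc N i * shiftF N i 1 (Ac N i)) * f)
              = ∑ i : Fin N, ((Uv - Vvar) *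
                (Ac N i * shiftF N i (-1) (Bc N i) - Bc N i * shiftF N i 1 (Ac N i))) * f :=
            Finset.sum_congr rfl fun i _ => (mul_assoc _ _ _).symm
          linear_combination hsum_mul - hmulsum - hcong
      _ = Hb * ((∏ i : Fin N, ((Vvar - Wv i) * (Vvar - Wv i - Hb)))⁻¹ -
            (∏ i : Fin N, ((Uv - Wv i) * (Uv - Wv i - Hb)))⁻¹) * f := by rw [e5]


end Main
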